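/- Let f be a fractional matching on a graph G (i.e., f : E → [0,1] with Σ_{e ∋ v} f_e ≤ 1 for every vertex v) that satisfies the blossom inequalities for all vertex sets S with |S| ≤ 1/ε, meaning Σ_{(u,v)∈E, u,v∈S} f_{(u,v)} ≤ ⌊|S|/2⌋. Then the maximum matching size of G satisfies μ(G) ≥ (1 − ε)·|f|, where |f| = Σ_e f_e. -/

import Mathlib

set_option linter.unusedSectionVars false
set_option maxHeartbeats 1000000
open Finset
open scoped Classical

namespace BT
variable {V : Type*} [Fintype V] [DecidableEq V]

/-- A matching: a set of non-diagonal `Sym2`s with each vertex in at most one. -/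
def IsMat (M : Finset (Sym2 V)) : Prop :=
  (∀ e ∈ M, ¬ e.IsDiag) ∧ ∀ v : V, (M.filter (fun e => v ∈ e)).card ≤ 1

/-- Covered vertices. -/
def cov (M : Finset (Sym2 V)) : Finset V := Finset.univ.filter (fun v => ∃ e ∈ M, v ∈ e)

lemma mem_cov {M : Finset (Sym2 V)} {v : V} : v ∈ cov M ↔ ∃ e ∈ M, v ∈ e := by
  simp [cov]

lemma IsMat.subset {M N : Finset (Sym2 V)} (h : IsMat N) (hMN : M ⊆ N) : IsMat M :=
  ⟨fun e he => h.1 e (hMN he),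
   fun v => le_trans (Finset.card_le_card (Finset.filter_subset_filter _ hMN)) (h.2 v)⟩

lemma IsMat.unique {M : Finset (Sym2 V)} (h : IsMat M) {e e' : Sym2 V} {v : V}
    (he : e ∈ M) (he' : e' ∈ M) (hv : v ∈ e) (hv' : v ∈ e') : e = e' := by
  have h1 : e ∈ M.filter (fun e => v ∈ e) := by simp [he, hv]
  have h2 : e' ∈ M.filter (fun e => v ∈ e) := by simp [he', hv']
  exact Finset.card_le_one.mp (h.2 v) _ h1 _ h2

lemma not_mem_cov_erase_self {M : Finset (Sym2 V)} (h : IsMat M) {a b : V}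
    (hab : s(a,b) ∈ M) : a ∉ cov (M.erase s(a,b)) := by
  rw [mem_cov]
  rintro ⟨e, heM, hae⟩
  have : e = s(a,b) := h.unique (Finset.mem_of_mem_erase heM) hab hae (by simp)
  exact (Finset.notMem_erase _ _) (this ▸ heM)

lemma cov_erase {M : Finset (Sym2 V)} (h : IsMat M) {a b : V} (hab : s(a,b) ∈ M) :
    cov (M.erase s(a,b)) = ((cov M).erase a).erase b := by
  ext v
  rw [Finset.mem_erase, Finset.mem_erase, mem_cov, mem_cov]
  constructor
  · rintro ⟨e, heM, hve⟩
    have heM' := Finset.mem_of_mem_erase heM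
    have hne : e ≠ s(a,b) := Finset.ne_of_mem_erase heM
    refine ⟨?_, ?_, e, heM', hve⟩
    · rintro rfl; exact hne (h.unique heM' hab hve (by simp))
    · rintro rfl; exact hne (h.unique heM' hab hve (by simp))
  · rintro ⟨hvb, hva, e, heM, hve⟩
    refine ⟨e, Finset.mem_erase.mpr ⟨?_, heM⟩, hve⟩
    rintro rfl
    rcases Sym2.mem_iff.mp hve with rfl | rfl
    · exact hva rfl
    · exact hvb rfl

lemma isMat_insert {M : Finset (Sym2 V)} (h : IsMat M) {a b : V} (hab : a ≠ b)
    (ha : a ∉ cov M) (hb : b ∉ cov M) : IsMat (insert s(a,b) M) := by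
  constructor
  · intro e he
    rcases Finset.mem_insert.mp he with rfl | he
    · simp [Sym2.mk_isDiag_iff, hab]
    · exact h.1 e he
  · intro v
    rw [Finset.filter_insert]
    split_ifs with hv
    · have hvM : M.filter (fun e => v ∈ e) = ∅ := by
        rw [Finset.filter_eq_empty_iff]
        intro e he hve
        rcases Sym2.mem_iff.mp hv with rfl | rfl
        · exact ha (mem_cov.mpr ⟨e, he, hve⟩)
        · exact hb (mem_cov.mpr ⟨e, he, hve⟩)
      rw [hvM]; simp
    · exact h.2 v

lemma not_mem_of_not_cov {M : Finset (Sym2 V)} {a b : V} (ha : a ∉ cov M) :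
    s(a,b) ∉ M := fun h => ha (mem_cov.mpr ⟨_, h, by simp⟩)

lemma cov_insert {M : Finset (Sym2 V)} {a b : V} :
    cov (insert s(a,b) M) = insert a (insert b (cov M)) := by
  ext v
  simp only [mem_cov, Finset.mem_insert]
  constructor
  · rintro ⟨e, he, hve⟩
    rcases he with rfl | he
    · rcases Sym2.mem_iff.mp hve with rfl | rfl
      · exact Or.inl rfl
      · exact Or.inr (Or.inl rfl)
    · exact Or.inr (Or.inr ⟨e, he, hve⟩)
  · rintro (rfl | rfl | ⟨e, he, hve⟩)
    · exact ⟨s(v,b), Or.inl rfl, by simp⟩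
    · exact ⟨s(a,v), Or.inl rfl, by simp⟩
    · exact ⟨e, Or.inr he, hve⟩

lemma cov_card {M : Finset (Sym2 V)} (h : IsMat M) : (cov M).card = 2 * M.card := by
  induction M using Finset.induction_on with
  | empty => simp [cov]
  | @insert e M heM ih =>
    have hM : IsMat M := h.subset (Finset.subset_insert _ _)
    induction e using Sym2.inductionOn with
    | _ a b =>
    have hab : a ≠ b := by
      have := h.1 s(a,b) (Finset.mem_insert_self _ _)
      simpa [Sym2.mk_isDiag_iff] using this
    have ha : a ∉ cov M := by
      rw [mem_cov]
      rintro ⟨e', he', hae'⟩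
      have he2 : s(a,b) = e' := h.unique (Finset.mem_insert_self _ _)
        (Finset.mem_insert_of_mem he') (by simp) hae'
      exact heM (he2 ▸ he')
    have hb : b ∉ cov M := by
      rw [mem_cov]
      rintro ⟨e', he', hbe'⟩
      have he2 : s(a,b) = e' := h.unique (Finset.mem_insert_self _ _)
        (Finset.mem_insert_of_mem he') (by simp) hbe'
      exact heM (he2 ▸ he')
    rw [cov_insert, Finset.card_insert_of_notMem, Finset.card_insert_of_notMem hb,
      ih hM, Finset.card_insert_of_notMem heM]
    · ring
    · simp only [Finset.mem_insert]
      push_neg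
      exact ⟨hab, ha⟩

lemma cov_mono {M N : Finset (Sym2 V)} (h : M ⊆ N) : cov M ⊆ cov N := by
  intro v hv
  obtain ⟨e, he, hve⟩ := mem_cov.mp hv
  exact mem_cov.mpr ⟨e, h he, hve⟩

/-- The key exchange lemma. -/
lemma core : ∀ n : ℕ, ∀ M N : Finset (Sym2 V), IsMat M → IsMat N → ∀ u : V,
    u ∉ cov M → u ∈ cov N → N.card ≤ n →
    (∃ P, IsMat P ∧ P ⊆ M ∪ N ∧ P.card = M.card + 1 ∧
      ∃ y, y ∈ cov N ∧ cov P = insert u (insert y (cov M)))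
    ∨ (∃ x, x ∈ cov M ∧ x ∉ cov N ∧ ∃ M₁ N₁, IsMat M₁ ∧ IsMat N₁ ∧
        M₁ ⊆ M ∪ N ∧ N₁ ⊆ M ∪ N ∧ M₁.card = M.card ∧ N₁.card = N.card ∧
        cov M₁ = (insert u (cov M)).erase x ∧ cov N₁ = insert x ((cov N).erase u) ∧
        M ∩ N ⊆ M ∩ N₁ ∧ ∃ e, e ∈ M ∧ e ∈ N₁ ∧ e ∉ N) := by
  intro n
  induction n with
  | zero =>
    intro M N hM hN u huM huN hcard
    obtain ⟨e, heN, -⟩ := mem_cov.mp huN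
    have : N = ∅ := Finset.card_eq_zero.mp (Nat.le_zero.mp hcard)
    simp [this] at heN
  | succ n ih =>
    intro M N hM hN u huM huN hcard
    obtain ⟨e1, he1N, hue1⟩ := mem_cov.mp huN
    obtain ⟨v1, rfl⟩ := Sym2.mem_iff_exists.mp hue1
    have huv1 : u ≠ v1 := by
      have := hN.1 _ he1N
      simpa [Sym2.mk_isDiag_iff] using this
    have hv1N : v1 ∈ cov N := mem_cov.mpr ⟨_, he1N, by simp⟩
    have he1M : s(u,v1) ∉ M := not_mem_of_not_cov huM
    by_cases hv1M : v1 ∈ cov M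
    case neg =>
      -- augmenting: single edge
      left
      refine ⟨insert s(u,v1) M, isMat_insert hM huv1 huM hv1M, ?_, ?_, v1, hv1N, cov_insert⟩
      · intro e he
        rcases Finset.mem_insert.mp he with rfl | he
        · exact Finset.mem_union_right _ he1N
        · exact Finset.mem_union_left _ he
      · rw [Finset.card_insert_of_notMem he1M]
    case pos =>
      obtain ⟨e2, he2M, hv1e2⟩ := mem_cov.mp hv1M
      obtain ⟨v2, rfl⟩ := Sym2.mem_iff_exists.mp hv1e2
      have hv1v2 : v1 ≠ v2 := by
        have := hM.1 _ he2M
        simpa [Sym2.mk_isDiag_iff] using this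
      have hv2M : v2 ∈ cov M := mem_cov.mpr ⟨_, he2M, by simp⟩
      have huv2 : u ≠ v2 := fun h => huM (h ▸ hv2M)
      have he2N : s(v1,v2) ∉ N := by
        intro hmem
        have : s(u,v1) = s(v1,v2) := hN.unique he1N hmem
          (Sym2.mem_iff.mpr (Or.inr rfl)) (Sym2.mem_iff.mpr (Or.inl rfl))
        have : u ∈ s(v1,v2) := this ▸ (by simp : u ∈ s(u,v1))
        rcases Sym2.mem_iff.mp this with h | h
        · exact huv1 h
        · exact huv2 h
      have he1e2 : s(u,v1) ≠ s(v1,v2) := fun h => he1M (h ▸ he2M)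
      have hcovMe : cov (M.erase s(v1,v2)) = ((cov M).erase v1).erase v2 :=
        cov_erase hM he2M
      have hcovNe : cov (N.erase s(u,v1)) = ((cov N).erase u).erase v1 :=
        cov_erase hN he1N
      have hMe : IsMat (M.erase s(v1,v2)) := hM.subset (Finset.erase_subset _ _)
      have hNe : IsMat (N.erase s(u,v1)) := hN.subset (Finset.erase_subset _ _)
      have hMcard1 : 1 ≤ M.card := Finset.card_pos.mpr ⟨_, he2M⟩
      have hNcard1 : 1 ≤ N.card := Finset.card_pos.mpr ⟨_, he1N⟩
      by_cases hv2N : v2 ∈ cov N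
      case neg =>
        -- base case of exchange: x = v2
        right
        have hM1s : u ∉ cov (M.erase s(v1,v2)) := by
          rw [hcovMe]; simp only [Finset.mem_erase]; tauto
        have hv1Ms : v1 ∉ cov (M.erase s(v1,v2)) := by
          rw [hcovMe]; simp only [Finset.mem_erase]; tauto
        have hv1Ns : v1 ∉ cov (N.erase s(u,v1)) := by
          rw [hcovNe]; simp only [Finset.mem_erase]; tauto
        have hv2Ns : v2 ∉ cov (N.erase s(u,v1)) := by
          rw [hcovNe]; simp only [Finset.mem_erase]
          intro h; exact hv2N h.2.2
        refine ⟨v2, hv2M, hv2N, insert s(u,v1) (M.erase s(v1,v2)),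
          insert s(v1,v2) (N.erase s(u,v1)),
          isMat_insert hMe huv1 hM1s hv1Ms, isMat_insert hNe hv1v2 hv1Ns hv2Ns,
          ?_, ?_, ?_, ?_, ?_, ?_, ?_, s(v1,v2), he2M, Finset.mem_insert_self _ _, he2N⟩
        · intro e he
          rcases Finset.mem_insert.mp he with rfl | he
          · exact Finset.mem_union_right _ he1N
          · exact Finset.mem_union_left _ (Finset.mem_of_mem_erase he)
        · intro e he
          rcases Finset.mem_insert.mp he with rfl | he
          · exact Finset.mem_union_left _ he2M
          · exact Finset.mem_union_right _ (Finset.mem_of_mem_erase he)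
        · rw [Finset.card_insert_of_notMem (not_mem_of_not_cov hM1s),
            Finset.card_erase_of_mem he2M]
          omega
        · rw [Finset.card_insert_of_notMem (not_mem_of_not_cov hv1Ns),
            Finset.card_erase_of_mem he1N]
          omega
        · rw [cov_insert, hcovMe]
          ext w
          simp only [Finset.mem_insert, Finset.mem_erase]
          constructor
          · rintro (rfl | rfl | ⟨h2, h1, h3⟩)
            · exact ⟨huv2, Or.inl rfl⟩
            · exact ⟨hv1v2, Or.inr hv1M⟩
            · exact ⟨h2, Or.inr h3⟩
          · rintro ⟨hw2, rfl | hw⟩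
            · exact Or.inl rfl
            · by_cases h1 : w = v1
              · exact Or.inr (Or.inl h1)
              · exact Or.inr (Or.inr ⟨hw2, h1, hw⟩)
        · rw [cov_insert, hcovNe]
          ext w
          simp only [Finset.mem_insert, Finset.mem_erase]
          constructor
          · rintro (rfl | rfl | ⟨h1, h2, h3⟩)
            · exact Or.inr ⟨Ne.symm huv1, hv1N⟩
            · exact Or.inl rfl
            · exact Or.inr ⟨h2, h3⟩
          · rintro (rfl | ⟨hwu, hw⟩)
            · exact Or.inr (Or.inl rfl)
            · by_cases h1 : w = v1
              · exact Or.inl h1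
              · exact Or.inr (Or.inr ⟨h1, hwu, hw⟩)
        · intro e he
          have heM := (Finset.mem_inter.mp he).1
          have heN := (Finset.mem_inter.mp he).2
          refine Finset.mem_inter.mpr ⟨heM, Finset.mem_insert_of_mem ?_⟩
          exact Finset.mem_erase.mpr ⟨fun h => he1M (h ▸ heM), heN⟩
      case pos =>
        -- recursive case
        have hv2Ms : v2 ∉ cov (M.erase s(v1,v2)) := by
          rw [hcovMe]; simp only [Finset.mem_erase]; tauto
        have hv2Ns : v2 ∈ cov (N.erase s(u,v1)) := by
          rw [hcovNe]
          exact Finset.mem_erase.mpr ⟨Ne.symm hv1v2,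
            Finset.mem_erase.mpr ⟨Ne.symm huv2, hv2N⟩⟩
        have hcard' : (N.erase s(u,v1)).card ≤ n := by
          rw [Finset.card_erase_of_mem he1N]; omega
        have hu_not_Ns : u ∉ cov (N.erase s(u,v1)) := by
          rw [hcovNe]; simp only [Finset.mem_erase]; tauto
        have hv1_not_Ns : v1 ∉ cov (N.erase s(u,v1)) := by
          rw [hcovNe]; simp only [Finset.mem_erase]; tauto
        have hv1_not_Ms : v1 ∉ cov (M.erase s(v1,v2)) := by
          rw [hcovMe]; simp only [Finset.mem_erase]; tauto
        have hu_not_Ms : u ∉ cov (M.erase s(v1,v2)) := by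
          rw [hcovMe]; simp only [Finset.mem_erase]; tauto
        rcases ih (M.erase s(v1,v2)) (N.erase s(u,v1)) hMe hNe v2 hv2Ms hv2Ns hcard' with
          ⟨P, hPmat, hPsub, hPcard, y, hyNs, hPcov⟩ |
          ⟨x, hxMs, hxNs, M₁s, N₁s, hM1mat, hN1mat, hM1sub, hN1sub, hM1card, hN1card,
            hM1cov, hN1cov, hintsub, ew, hewM, hewN1, hewN⟩
        · -- lift augmenting
          left
          have hyN : y ∈ cov N := by
            have := hcovNe ▸ hyNs
            exact Finset.mem_of_mem_erase (Finset.mem_of_mem_erase this)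
          have hyu : y ≠ u := by
            have := hcovNe ▸ hyNs
            exact (Finset.mem_erase.mp (Finset.mem_of_mem_erase this)).1
          have hyv1 : y ≠ v1 := by
            have := hcovNe ▸ hyNs
            exact (Finset.mem_erase.mp this).1
          have huP : u ∉ cov P := by
            rw [hPcov]
            simp only [Finset.mem_insert]
            push_neg
            exact ⟨huv2, fun h => hyu h.symm, hu_not_Ms⟩
          have hv1P : v1 ∉ cov P := by
            rw [hPcov]
            simp only [Finset.mem_insert]
            push_neg
            exact ⟨hv1v2, fun h => hyv1 h.symm, hv1_not_Ms⟩
          refine ⟨insert s(u,v1) P, isMat_insert hPmat huv1 huP hv1P, ?_, ?_, y, hyN, ?_⟩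
          · intro e he
            rcases Finset.mem_insert.mp he with rfl | he
            · exact Finset.mem_union_right _ he1N
            · rcases Finset.mem_union.mp (hPsub he) with h | h
              · exact Finset.mem_union_left _ (Finset.mem_of_mem_erase h)
              · exact Finset.mem_union_right _ (Finset.mem_of_mem_erase h)
          · rw [Finset.card_insert_of_notMem (not_mem_of_not_cov huP), hPcard,
              Finset.card_erase_of_mem he2M]
            omega
          · rw [cov_insert, hPcov, hcovMe]
            ext w
            simp only [Finset.mem_insert, Finset.mem_erase]
            constructor
            · rintro (rfl | rfl | rfl | rfl | ⟨h2, h1, h3⟩)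
              · exact Or.inl rfl
              · exact Or.inr (Or.inr hv1M)
              · exact Or.inr (Or.inr hv2M)
              · exact Or.inr (Or.inl rfl)
              · exact Or.inr (Or.inr h3)
            · rintro (rfl | rfl | hw)
              · exact Or.inl rfl
              · exact Or.inr (Or.inr (Or.inr (Or.inl rfl)))
              · by_cases h1 : w = v1
                · exact Or.inr (Or.inl h1)
                · by_cases h2 : w = v2
                  · exact Or.inr (Or.inr (Or.inl h2))
                  · exact Or.inr (Or.inr (Or.inr (Or.inr ⟨h2, h1, hw⟩)))
        · -- lift exchange
          right
          have hxv1 : x ≠ v1 := fun h => hv1_not_Ms (h ▸ hxMs)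
          have hxv2 : x ≠ v2 := fun h => hv2Ms (h ▸ hxMs)
          have hxM : x ∈ cov M := by
            have := hcovMe ▸ hxMs
            exact Finset.mem_of_mem_erase (Finset.mem_of_mem_erase this)
          have hxu : x ≠ u := fun h => huM (h ▸ hxM)
          have hxN : x ∉ cov N := by
            intro hx
            exact hxNs (hcovNe ▸ Finset.mem_erase.mpr ⟨hxv1, Finset.mem_erase.mpr ⟨hxu, hx⟩⟩)
          have hu_not_M1s : u ∉ cov M₁s := by
            rw [hM1cov]
            simp only [Finset.mem_erase, Finset.mem_insert]
            rintro ⟨-, rfl | h⟩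
            · exact huv2 rfl
            · exact hu_not_Ms h
          have hv1_not_M1s : v1 ∉ cov M₁s := by
            rw [hM1cov]
            simp only [Finset.mem_erase, Finset.mem_insert]
            rintro ⟨-, rfl | h⟩
            · exact hv1v2 rfl
            · exact hv1_not_Ms h
          have hv1_not_N1s : v1 ∉ cov N₁s := by
            rw [hN1cov]
            simp only [Finset.mem_insert, Finset.mem_erase]
            rintro (rfl | ⟨-, h⟩)
            · exact hxv1 rfl
            · exact hv1_not_Ns h
          have hv2_not_N1s : v2 ∉ cov N₁s := by
            rw [hN1cov]
            simp only [Finset.mem_insert, Finset.mem_erase]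
            rintro (rfl | ⟨h, -⟩)
            · exact hxv2 rfl
            · exact h rfl
          refine ⟨x, hxM, hxN, insert s(u,v1) M₁s, insert s(v1,v2) N₁s,
            isMat_insert hM1mat huv1 hu_not_M1s hv1_not_M1s,
            isMat_insert hN1mat hv1v2 hv1_not_N1s hv2_not_N1s,
            ?_, ?_, ?_, ?_, ?_, ?_, ?_, s(v1,v2), he2M, Finset.mem_insert_self _ _, he2N⟩
          · intro e he
            rcases Finset.mem_insert.mp he with rfl | he
            · exact Finset.mem_union_right _ he1N
            · rcases Finset.mem_union.mp (hM1sub he) with h | h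
              · exact Finset.mem_union_left _ (Finset.mem_of_mem_erase h)
              · exact Finset.mem_union_right _ (Finset.mem_of_mem_erase h)
          · intro e he
            rcases Finset.mem_insert.mp he with rfl | he
            · exact Finset.mem_union_left _ he2M
            · rcases Finset.mem_union.mp (hN1sub he) with h | h
              · exact Finset.mem_union_left _ (Finset.mem_of_mem_erase h)
              · exact Finset.mem_union_right _ (Finset.mem_of_mem_erase h)
          · rw [Finset.card_insert_of_notMem (not_mem_of_not_cov hu_not_M1s), hM1card,
              Finset.card_erase_of_mem he2M]
            omega
          · rw [Finset.card_insert_of_notMem (not_mem_of_not_cov hv1_not_N1s), hN1card,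
              Finset.card_erase_of_mem he1N]
            omega
          · rw [cov_insert, hM1cov, hcovMe]
            ext w
            simp only [Finset.mem_insert, Finset.mem_erase]
            constructor
            · rintro (rfl | rfl | ⟨hwx, rfl | ⟨h1, h2, h3⟩⟩)
              · exact ⟨hxu.symm, Or.inl rfl⟩
              · exact ⟨hxv1.symm, Or.inr hv1M⟩
              · exact ⟨hwx, Or.inr hv2M⟩
              · exact ⟨hwx, Or.inr h3⟩
            · rintro ⟨hwx, rfl | hw⟩
              · exact Or.inl rfl
              · by_cases h1 : w = v1
                · exact Or.inr (Or.inl h1)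
                · by_cases h2 : w = v2
                  · exact Or.inr (Or.inr ⟨hwx, Or.inl h2⟩)
                  · exact Or.inr (Or.inr ⟨hwx, Or.inr ⟨h2, h1, hw⟩⟩)
          · rw [cov_insert, hN1cov, hcovNe]
            ext w
            simp only [Finset.mem_insert, Finset.mem_erase]
            constructor
            · rintro (rfl | rfl | rfl | ⟨h1, h2, h3, h4⟩)
              · exact Or.inr ⟨huv1.symm, hv1N⟩
              · exact Or.inr ⟨huv2.symm, hv2N⟩
              · exact Or.inl rfl
              · exact Or.inr ⟨h3, h4⟩
            · rintro (rfl | ⟨hwu, hw⟩)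
              · exact Or.inr (Or.inr (Or.inl rfl))
              · by_cases h1 : w = v1
                · exact Or.inl h1
                · by_cases h2 : w = v2
                  · exact Or.inr (Or.inl h2)
                  · exact Or.inr (Or.inr (Or.inr ⟨h2, h1, hwu, hw⟩))
          · intro e he
            have heM := (Finset.mem_inter.mp he).1
            have heN := (Finset.mem_inter.mp he).2
            have h1 : e ∈ M.erase s(v1,v2) :=
              Finset.mem_erase.mpr ⟨fun h => he2N (h ▸ heN), heM⟩
            have h2 : e ∈ N.erase s(u,v1) :=
              Finset.mem_erase.mpr ⟨fun h => he1M (h ▸ heM), heN⟩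
            have := hintsub (Finset.mem_inter.mpr ⟨h1, h2⟩)
            exact Finset.mem_inter.mpr ⟨heM,
              Finset.mem_insert_of_mem (Finset.mem_inter.mp this).2⟩


/-- Matching of the graph `G`. -/
def GMat (G : SimpleGraph V) (M : Finset (Sym2 V)) : Prop :=
  M ⊆ G.edgeFinset ∧ IsMat M

noncomputable def nu (G : SimpleGraph V) : ℕ :=
  (G.edgeFinset.powerset.filter IsMat).sup Finset.card

lemma gmat_iff_mem {G : SimpleGraph V} {M : Finset (Sym2 V)} :
    GMat G M ↔ M ∈ G.edgeFinset.powerset.filter IsMat := by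
  rw [Finset.mem_filter, Finset.mem_powerset]
  exact Iff.rfl

lemma nu_le {G : SimpleGraph V} {M : Finset (Sym2 V)} (h : GMat G M) : M.card ≤ nu G :=
  Finset.le_sup (gmat_iff_mem.mp h)

lemma isMat_empty : IsMat (∅ : Finset (Sym2 V)) := ⟨by simp, by simp⟩

lemma exists_nu (G : SimpleGraph V) : ∃ M, GMat G M ∧ M.card = nu G := by
  have hne : (G.edgeFinset.powerset.filter IsMat).Nonempty :=
    ⟨∅, by simp [isMat_empty]⟩
  obtain ⟨M, hM, hMc⟩ := Finset.exists_mem_eq_sup _ hne Finset.card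
  exact ⟨M, gmat_iff_mem.mpr hM, hMc.symm⟩

lemma no_aug {G : SimpleGraph V} {M : Finset (Sym2 V)} (hM : GMat G M)
    (hc : M.card = nu G) {a b : V} (hab : G.Adj a b)
    (ha : a ∉ cov M) (hb : b ∉ cov M) : False := by
  have h2 : GMat G (insert s(a,b) M) :=
    ⟨Finset.insert_subset (SimpleGraph.mem_edgeFinset.mpr (G.mem_edgeSet.mpr hab)) hM.1,
     isMat_insert hM.2 hab.ne ha hb⟩
  have h3 := nu_le h2
  rw [Finset.card_insert_of_notMem (not_mem_of_not_cov ha)] at h3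
  omega

lemma gallai_aux (G : SimpleGraph V)
    (hall : ∀ v : V, ∃ N, GMat G N ∧ N.card = nu G ∧ v ∉ cov N) :
    ∀ d : ℕ, ∀ M : Finset (Sym2 V), ∀ u v : V, GMat G M → M.card = nu G →
      u ∉ cov M → v ∉ cov M → u ≠ v → G.Reachable u v → G.dist u v ≤ d → False := by
  intro d
  induction d using Nat.strong_induction_on with
  | _ d ih =>
  intro M u v hM hMc huM hvM huv hr hd
  obtain ⟨p, hp⟩ := hr.exists_walk_length_eq_dist
  cases p with
  | nil => exact huv rfl
  | @cons _ w _ h q =>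
    rw [SimpleGraph.Walk.length_cons] at hp
    have hdq : G.dist w v ≤ q.length := SimpleGraph.dist_le q
    by_cases hq : q.length = 0
    · have hwv : w = v := q.eq_of_length_eq_zero hq
      subst hwv
      exact no_aug hM hMc h huM hvM
    · have hd2 : 2 ≤ G.dist u v := by omega
      have hduv1 : G.dist u v ≤ 1 → False := by omega
      have hwv : w ≠ v := by
        rintro rfl
        exact hduv1 (by simpa using SimpleGraph.dist_le (SimpleGraph.Walk.cons h SimpleGraph.Walk.nil))
      have hrwv : G.Reachable w v := ⟨q⟩
      have hruw : G.Reachable u w := ⟨SimpleGraph.Walk.cons h SimpleGraph.Walk.nil⟩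
      have hduw : G.dist u w ≤ 1 := by
        simpa using SimpleGraph.dist_le (SimpleGraph.Walk.cons h SimpleGraph.Walk.nil)
      have hwM : w ∈ cov M := by
        by_contra hw
        exact ih (G.dist w v) (by omega) M w v hM hMc hw hvM hwv hrwv le_rfl
      set C := G.edgeFinset.powerset.filter
        (fun N => IsMat N ∧ N.card = nu G ∧ w ∉ cov N) with hC
      have hCne : C.Nonempty := by
        obtain ⟨N, hN, hNc, hNw⟩ := hall w
        exact ⟨N, by simp [hC, Finset.mem_powerset, hN.1, hN.2, hNc, hNw]⟩
      obtain ⟨N, hNC, hNmax⟩ := Finset.exists_max_image C (fun N => (M ∩ N).card) hCne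
      rw [hC, Finset.mem_filter, Finset.mem_powerset] at hNC
      have hNsub := hNC.1
      have hNmat := hNC.2.1
      have hNcard := hNC.2.2.1
      have hwN := hNC.2.2.2
      have hNG : GMat G N := ⟨hNsub, hNmat⟩
      have huN : u ∈ cov N := by
        by_contra hu
        exact ih 1 (by omega) N u w hNG hNcard hu hwN h.ne hruw hduw
      have hvN : v ∈ cov N := by
        by_contra hv2
        exact ih (G.dist w v) (by omega) N w v hNG hNcard hwN hv2 hwv hrwv le_rfl
      rcases core N.card M N hM.2 hNmat u huM huN le_rfl with
        ⟨P, hPmat, hPsub, hPcard, -⟩ |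
        ⟨x, hxM, hxN, M₁, N₁, h1, h2, h3, h4, h5, h6, h7, h8, h9, ew, hew1, hew2, hew3⟩
      · have hPG : GMat G P := ⟨hPsub.trans (Finset.union_subset hM.1 hNsub), hPmat⟩
        have := nu_le hPG
        omega
      · by_cases hxw : x = w
        · subst hxw
          have hM₁ : GMat G M₁ := ⟨h3.trans (Finset.union_subset hM.1 hNsub), h1⟩
          have hxM₁ : x ∉ cov M₁ := by rw [h7]; exact Finset.notMem_erase _ _
          have hvM₁ : v ∉ cov M₁ := by
            rw [h7]
            simp only [Finset.mem_erase, Finset.mem_insert]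
            rintro ⟨-, rfl | hvc⟩
            · exact huv rfl
            · exact hvM hvc
          exact ih (G.dist x v) (by omega) M₁ x v hM₁ (h5.trans hMc) hxM₁ hvM₁ hwv hrwv le_rfl
        · have hN₁C : N₁ ∈ C := by
            rw [hC, Finset.mem_filter, Finset.mem_powerset]
            refine ⟨h4.trans (Finset.union_subset hM.1 hNsub), h2, h6.trans hNcard, ?_⟩
            rw [h8]
            simp only [Finset.mem_insert, Finset.mem_erase]
            rintro (rfl | ⟨-, hwc⟩)
            · exact hxw rfl
            · exact hwN hwc
          have hle := hNmax N₁ hN₁C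
          have hlt : (M ∩ N).card < (M ∩ N₁).card := by
            apply Finset.card_lt_card
            refine ⟨h9, fun hcon => ?_⟩
            exact hew3 ((Finset.mem_inter.mp (hcon (Finset.mem_inter.mpr ⟨hew1, hew2⟩))).2)
          omega

lemma case2 (G : SimpleGraph V)
    (hall : ∀ v : V, ∃ N, GMat G N ∧ N.card = nu G ∧ v ∉ cov N) :
    ∃ P : Finset (Finset V),
      (∀ S ∈ P, ∀ T ∈ P, S ≠ T → Disjoint S T) ∧
      (∀ w : V, ∃ S ∈ P, w ∈ S) ∧
      (∀ e ∈ G.edgeFinset, ∃ S ∈ P, ∀ w ∈ e, w ∈ S) ∧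
      Fintype.card V ≤ 2 * nu G + (P.filter (fun S => Odd S.card)).card := by
  set comp : V → Finset V := fun x =>
    Finset.univ.filter (fun w => G.connectedComponentMk w = G.connectedComponentMk x) with hcomp
  have hmem_comp : ∀ x w : V, w ∈ comp x ↔
      G.connectedComponentMk w = G.connectedComponentMk x := by
    intro x w; simp [hcomp]
  have hcomp_eq : ∀ x y : V,
      G.connectedComponentMk x = G.connectedComponentMk y → comp x = comp y := by
    intro x y hxy
    ext w
    rw [hmem_comp, hmem_comp, hxy]
  refine ⟨Finset.univ.image comp, ?_, ?_, ?_, ?_⟩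
  · rintro S hS T hT hST
    obtain ⟨x, -, rfl⟩ := Finset.mem_image.mp hS
    obtain ⟨y, -, rfl⟩ := Finset.mem_image.mp hT
    rw [Finset.disjoint_left]
    intro w hwx hwy
    rw [hmem_comp] at hwx hwy
    exact hST (hcomp_eq x y (hwx ▸ hwy ▸ rfl))
  · intro w
    exact ⟨comp w, Finset.mem_image_of_mem _ (Finset.mem_univ w),
      (hmem_comp w w).mpr rfl⟩
  · intro e he
    induction e using Sym2.inductionOn with
    | _ a b =>
      have hadj : G.Adj a b := G.mem_edgeSet.mp (SimpleGraph.mem_edgeFinset.mp he)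
      refine ⟨comp a, Finset.mem_image_of_mem _ (Finset.mem_univ a), ?_⟩
      intro w hw
      rcases Sym2.mem_iff.mp hw with h | h
      · exact (hmem_comp a w).mpr (by rw [h])
      · exact (hmem_comp a w).mpr (by
          rw [h]
          exact SimpleGraph.ConnectedComponent.eq.mpr hadj.symm.reachable)
  · obtain ⟨M, hM, hMc⟩ := exists_nu G
    have hcovc : (cov M).card = 2 * nu G := by rw [cov_card hM.2, hMc]
    have hgal := gallai_aux G hall
    -- every missed vertex maps to an odd component
    have hmaps : ∀ x ∈ Finset.univ \ cov M,
        comp x ∈ (Finset.univ.image comp).filter (fun S => Odd S.card) := by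
      intro x hx
      have hxM : x ∉ cov M := (Finset.mem_sdiff.mp hx).2
      rw [Finset.mem_filter]
      refine ⟨Finset.mem_image_of_mem _ (Finset.mem_univ x), ?_⟩
      -- the matching restricted to the component
      set MS := M.filter (fun e => ∀ w ∈ e, w ∈ comp x) with hMS
      have hMSmat : IsMat MS := hM.2.subset (Finset.filter_subset _ _)
      have hcovMS : cov MS = comp x ∩ cov M := by
        ext w
        rw [mem_cov, Finset.mem_inter]
        constructor
        · rintro ⟨e, heMS, hwe⟩
          rw [hMS, Finset.mem_filter] at heMS
          exact ⟨heMS.2 w hwe, mem_cov.mpr ⟨e, heMS.1, hwe⟩⟩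
        · rintro ⟨hwS, hwM⟩
          obtain ⟨e, heM, hwe⟩ := mem_cov.mp hwM
          obtain ⟨z, rfl⟩ := Sym2.mem_iff_exists.mp hwe
          have hadj : G.Adj w z := G.mem_edgeSet.mp (SimpleGraph.mem_edgeFinset.mp (hM.1 heM))
          have hzS : z ∈ comp x := by
            rw [hmem_comp]
            rw [hmem_comp] at hwS
            exact (SimpleGraph.ConnectedComponent.eq.mpr hadj.symm.reachable).trans hwS
          refine ⟨s(w,z), ?_, by simp⟩
          rw [hMS, Finset.mem_filter]
          refine ⟨heM, ?_⟩
          intro y hy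
          rcases Sym2.mem_iff.mp hy with rfl | rfl
          · exact hwS
          · exact hzS
      have hsd : comp x \ cov M = {x} := by
        ext y
        rw [Finset.mem_sdiff, Finset.mem_singleton]
        constructor
        · rintro ⟨hyS, hyM⟩
          by_contra hyx
          rw [hmem_comp] at hyS
          exact hgal (G.dist y x) M y x hM hMc hyM hxM hyx
            (SimpleGraph.ConnectedComponent.eq.mp hyS) le_rfl
        · rintro rfl
          exact ⟨(hmem_comp y y).mpr rfl, hxM⟩
      have hsplit : (comp x ∩ cov M).card + (comp x \ cov M).card = (comp x).card :=
        Finset.card_inter_add_card_sdiff _ _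
      rw [hsd, ← hcovMS, cov_card hMSmat] at hsplit
      simp only [Finset.card_singleton] at hsplit
      exact ⟨MS.card, by omega⟩
    have hinj : Set.InjOn comp ↑(Finset.univ \ cov M) := by
      intro x hx y hy hxy
      by_contra hne
      have hx' : x ∉ cov M := (Finset.mem_sdiff.mp hx).2
      have hy' : y ∉ cov M := (Finset.mem_sdiff.mp hy).2
      have : y ∈ comp x := hxy ▸ (hmem_comp y y).mpr rfl
      rw [hmem_comp] at this
      exact hgal (G.dist x y) M x y hM hMc hx' hy' (fun h => hne h)
        (SimpleGraph.ConnectedComponent.eq.mp this).symm le_rfl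
    have hcard := Finset.card_le_card_of_injOn comp hmaps hinj
    have h1 : (Finset.univ \ cov M).card = Fintype.card V - (cov M).card := by
      rw [Finset.card_sdiff_of_subset (Finset.subset_univ _), Finset.card_univ]
    have h2 : (cov M).card ≤ Fintype.card V := by
      rw [← Finset.card_univ]
      exact Finset.card_le_card (Finset.subset_univ _)
    omega

/-- Delete all edges at `v`. -/
def delv (G : SimpleGraph V) (v : V) : SimpleGraph V where
  Adj x y := G.Adj x y ∧ x ≠ v ∧ y ≠ v
  symm := ⟨by rintro x y ⟨h, hx, hy⟩; exact ⟨h.symm, hy, hx⟩⟩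
  loopless := ⟨by rintro x ⟨h, -, -⟩; exact G.loopless.irrefl x h⟩

lemma delv_edge_mem {G : SimpleGraph V} {v : V} {e : Sym2 V} :
    e ∈ (delv G v).edgeFinset ↔ e ∈ G.edgeFinset ∧ ∀ w ∈ e, w ≠ v := by
  induction e using Sym2.inductionOn with
  | _ a b =>
    rw [SimpleGraph.mem_edgeFinset, SimpleGraph.mem_edgeFinset,
      SimpleGraph.mem_edgeSet, SimpleGraph.mem_edgeSet]
    constructor
    · rintro ⟨h, ha, hb⟩
      refine ⟨h, ?_⟩
      intro w hw
      rcases Sym2.mem_iff.mp hw with rfl | rfl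
      · exact ha
      · exact hb
    · rintro ⟨h, hall⟩
      exact ⟨h, hall a (by simp), hall b (by simp)⟩

lemma gmat_delv {G : SimpleGraph V} {v : V} {M : Finset (Sym2 V)} :
    GMat (delv G v) M ↔ GMat G M ∧ v ∉ cov M := by
  constructor
  · rintro ⟨hsub, hmat⟩
    refine ⟨⟨fun e he => (delv_edge_mem.mp (hsub he)).1, hmat⟩, ?_⟩
    intro hv
    obtain ⟨e, heM, hve⟩ := mem_cov.mp hv
    exact (delv_edge_mem.mp (hsub heM)).2 v hve rfl
  · rintro ⟨⟨hsub, hmat⟩, hv⟩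
    refine ⟨fun e he => delv_edge_mem.mpr ⟨hsub he, ?_⟩, hmat⟩
    intro w hwe hwv
    exact hv (mem_cov.mpr ⟨e, he, hwv ▸ hwe⟩)

theorem berge : ∀ (k : ℕ) (G : SimpleGraph V), G.edgeFinset.card ≤ k →
    ∃ (U : Finset V) (P : Finset (Finset V)),
      (∀ S ∈ P, ∀ T ∈ P, S ≠ T → Disjoint S T) ∧
      (∀ S ∈ P, ∀ w ∈ S, w ∉ U) ∧
      (∀ w : V, w ∉ U → ∃ S ∈ P, w ∈ S) ∧
      (∀ e ∈ G.edgeFinset, (∀ w ∈ e, w ∉ U) → ∃ S ∈ P, ∀ w ∈ e, w ∈ S) ∧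
      Fintype.card V + U.card ≤ 2 * nu G + (P.filter (fun S => Odd S.card)).card := by
  intro k
  induction k using Nat.strong_induction_on with
  | _ k ih =>
  intro G hk
  by_cases hall : ∀ v : V, ∃ N, GMat G N ∧ N.card = nu G ∧ v ∉ cov N
  · obtain ⟨P, h1, h2, h3, h4⟩ := case2 G hall
    exact ⟨∅, P, h1, by simp, fun w _ => h2 w, fun e he _ => h3 e he, by simpa using h4⟩
  · push_neg at hall
    obtain ⟨v, hv⟩ := hall
    have hedge : ∃ w, G.Adj v w := by
      by_contra hno
      push_neg at hno
      obtain ⟨M, hM, hMc⟩ := exists_nu G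
      have hvM : v ∈ cov M := hv M hM hMc
      obtain ⟨e, heM, hve⟩ := mem_cov.mp hvM
      obtain ⟨w, rfl⟩ := Sym2.mem_iff_exists.mp hve
      exact hno w (G.mem_edgeSet.mp (SimpleGraph.mem_edgeFinset.mp (hM.1 heM)))
    obtain ⟨w0, hw0⟩ := hedge
    have hvw0 : s(v,w0) ∈ G.edgeFinset :=
      SimpleGraph.mem_edgeFinset.mpr (G.mem_edgeSet.mpr hw0)
    have hvw0' : s(v,w0) ∉ (delv G v).edgeFinset := by
      rw [delv_edge_mem]
      rintro ⟨-, hall2⟩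
      exact hall2 v (by simp) rfl
    have hGsub : (delv G v).edgeFinset ⊆ G.edgeFinset :=
      fun e he => (delv_edge_mem.mp he).1
    have hlt : (delv G v).edgeFinset.card < G.edgeFinset.card :=
      Finset.card_lt_card ⟨hGsub, fun hcon => hvw0' (hcon hvw0)⟩
    have hnu : nu (delv G v) < nu G := by
      obtain ⟨M', hM', hM'c⟩ := exists_nu (delv G v)
      obtain ⟨hg, hvcov⟩ := gmat_delv.mp hM'
      have hle : M'.card ≤ nu G := nu_le hg
      have hne2 : M'.card ≠ nu G := fun hcon => hvcov (hv M' hg hcon)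
      omega
    obtain ⟨U', P', p1, p2, p3, p4, p5⟩ :=
      ih (delv G v).edgeFinset.card (lt_of_lt_of_le hlt hk) (delv G v) le_rfl
    by_cases hvU : v ∈ U'
    · refine ⟨U', P', p1, p2, p3, ?_, by omega⟩
      intro e he hU
      apply p4 e ?_ hU
      rw [delv_edge_mem]
      exact ⟨he, fun w hwe hweq => hU w hwe (hweq ▸ hvU)⟩
    · obtain ⟨S', hS'P, hvS'⟩ := p3 v hvU
      refine ⟨insert v U', insert (S'.erase v) (P'.erase S'), ?_, ?_, ?_, ?_, ?_⟩
      · intro S hS T hT hST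
        rcases Finset.mem_insert.mp hS with rfl | hS <;>
          rcases Finset.mem_insert.mp hT with rfl | hT
        · exact absurd rfl hST
        · exact Finset.disjoint_of_subset_left (Finset.erase_subset _ _)
            (p1 S' hS'P T (Finset.mem_of_mem_erase hT)
              (Ne.symm (Finset.ne_of_mem_erase hT)))
        · exact Finset.disjoint_of_subset_right (Finset.erase_subset _ _)
            (p1 S (Finset.mem_of_mem_erase hS) S' hS'P (Finset.ne_of_mem_erase hS))
        · exact p1 S (Finset.mem_of_mem_erase hS) T (Finset.mem_of_mem_erase hT) hST
      · intro S hS x hxS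
        rcases Finset.mem_insert.mp hS with rfl | hS
        · have hx1 : x ≠ v := (Finset.mem_erase.mp hxS).1
          have hx2 : x ∉ U' := p2 S' hS'P x (Finset.mem_of_mem_erase hxS)
          simp only [Finset.mem_insert]
          rintro (rfl | hcon)
          · exact hx1 rfl
          · exact hx2 hcon
        · have hSne : S ≠ S' := Finset.ne_of_mem_erase hS
          have hSP' := Finset.mem_of_mem_erase hS
          have hx2 : x ∉ U' := p2 S hSP' x hxS
          have hxv : x ≠ v := by
            rintro rfl
            have hdisj := p1 S' hS'P S hSP' (Ne.symm hSne)
            exact (Finset.disjoint_left.mp hdisj hvS') hxS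
          simp only [Finset.mem_insert]
          rintro (rfl | hcon)
          · exact hxv rfl
          · exact hx2 hcon
      · intro x hxU
        simp only [Finset.mem_insert, not_or] at hxU
        obtain ⟨S, hSP, hxS⟩ := p3 x hxU.2
        by_cases hSS : S = S'
        · subst hSS
          exact ⟨S.erase v, Finset.mem_insert_self _ _,
            Finset.mem_erase.mpr ⟨hxU.1, hxS⟩⟩
        · exact ⟨S, Finset.mem_insert_of_mem (Finset.mem_erase.mpr ⟨hSS, hSP⟩), hxS⟩
      · intro e he hU
        have heG' : e ∈ (delv G v).edgeFinset := delv_edge_mem.mpr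
          ⟨he, fun x hxe hxv => hU x hxe (hxv ▸ Finset.mem_insert_self v U')⟩
        have hU' : ∀ x ∈ e, x ∉ U' :=
          fun x hxe hcon => hU x hxe (Finset.mem_insert_of_mem hcon)
        obtain ⟨S, hSP, hin⟩ := p4 e heG' hU'
        by_cases hSS : S = S'
        · subst hSS
          refine ⟨S.erase v, Finset.mem_insert_self _ _, fun x hxe => ?_⟩
          exact Finset.mem_erase.mpr
            ⟨fun hcon => hU x hxe (hcon ▸ Finset.mem_insert_self v U'), hin x hxe⟩
        · exact ⟨S, Finset.mem_insert_of_mem (Finset.mem_erase.mpr ⟨hSS, hSP⟩), hin⟩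
      · have hUc : (insert v U').card ≤ U'.card + 1 := Finset.card_insert_le _ _
        have hodd1 : (P'.filter (fun S => Odd S.card)).card - 1 ≤
            ((P'.erase S').filter (fun S => Odd S.card)).card := by
          rw [Finset.filter_erase]
          exact Finset.pred_card_le_card_erase
        have hodd2 : ((P'.erase S')).filter (fun S => Odd S.card) ⊆
            (insert (S'.erase v) (P'.erase S')).filter (fun S => Odd S.card) :=
          Finset.filter_subset_filter _ (Finset.subset_insert _ _)
        have hodd3 := Finset.card_le_card hodd2
        omega


lemma swap_sum (f : Sym2 V → ℝ) (W : Finset V) (E : Finset (Sym2 V)) :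
    ∑ v ∈ W, ∑ e ∈ E.filter (fun e => v ∈ e), f e
      = ∑ e ∈ E, ((W.filter (fun v => v ∈ e)).card : ℝ) * f e := by
  have h1 : ∀ v ∈ W, ∑ e ∈ E.filter (fun e => v ∈ e), f e
      = ∑ e ∈ E, if v ∈ e then f e else 0 :=
    fun v _ => Finset.sum_filter _ _
  rw [Finset.sum_congr rfl h1, Finset.sum_comm]
  refine Finset.sum_congr rfl (fun e _ => ?_)
  rw [← Finset.sum_filter, Finset.sum_const, nsmul_eq_mul]


end BT

open BT

/-- Let `f` be a fractional matching on a graph `G` (values in `[0,1]`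
supported on edges with `Σ_{e ∋ v} f_e ≤ 1` at every vertex) satisfying the blossom
inequalities for every vertex set `S` with `|S| ≤ 1/ε`.  Then `G` has a matching `M`
with `|M| ≥ (1 − ε)·|f|`, i.e. `μ(G) ≥ (1 − ε)·|f|`. -/
theorem stmt_4 {V : Type*} [Fintype V] [DecidableEq V]
    (G : SimpleGraph V) (f : Sym2 V → ℝ) (ε : ℝ) (hε : 0 < ε)
    (hf0 : ∀ e, 0 ≤ f e) (hf1 : ∀ e, f e ≤ 1)
    (hsupp : ∀ e, e ∉ G.edgeSet → f e = 0)
    (hfm : ∀ v : V, ∑ e ∈ G.edgeFinset.filter (fun e => v ∈ e), f e ≤ 1)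
    (hblossom : ∀ S : Finset V, (S.card : ℝ) ≤ 1/ε →
      ∑ e ∈ G.edgeFinset.filter (fun e => ∀ v ∈ e, v ∈ S), f e ≤ ((S.card / 2 : ℕ) : ℝ)) :
    ∃ M : Finset (Sym2 V), M ⊆ G.edgeFinset ∧
      (∀ v : V, (M.filter (fun e => v ∈ e)).card ≤ 1) ∧
      (1 - ε) * (∑ e ∈ G.edgeFinset, f e) ≤ (M.card : ℝ) := by
  by_cases hε1 : 1 ≤ ε
  · refine ⟨∅, by simp, by simp, ?_⟩
    have h1 : (0:ℝ) ≤ ∑ e ∈ G.edgeFinset, f e := Finset.sum_nonneg (fun e _ => hf0 e)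
    have h2 : 1 - ε ≤ 0 := by linarith
    simpa using mul_nonpos_of_nonpos_of_nonneg h2 h1
  · push_neg at hε1
    obtain ⟨U, P, q1, q2, q3, q4, q5⟩ := berge G.edgeFinset.card G le_rfl
    obtain ⟨M, hM, hMc⟩ := exists_nu G
    refine ⟨M, hM.1, hM.2.2, ?_⟩
    -- split the edge sum
    set A := G.edgeFinset.filter (fun e => ∃ w ∈ e, w ∈ U) with hA
    set B := G.edgeFinset.filter (fun e => ¬ ∃ w ∈ e, w ∈ U) with hB
    have hsplit : ∑ e ∈ G.edgeFinset, f e = ∑ e ∈ A, f e + ∑ e ∈ B, f e :=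
      (Finset.sum_filter_add_sum_filter_not _ _ _).symm
    -- Step 1 : the A part is at most |U|
    have hU1 : ∑ e ∈ A, f e ≤ (U.card : ℝ) := by
      have hle1 : ∑ e ∈ A, f e
          ≤ ∑ e ∈ A, ((U.filter (fun v => v ∈ e)).card : ℝ) * f e := by
        refine Finset.sum_le_sum (fun e he => ?_)
        rw [hA, Finset.mem_filter] at he
        obtain ⟨-, w, hwe, hwU⟩ := he
        have hpos : 0 < (U.filter (fun v => v ∈ e)).card :=
          Finset.card_pos.mpr ⟨w, Finset.mem_filter.mpr ⟨hwU, hwe⟩⟩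
        have : (1:ℝ) ≤ ((U.filter (fun v => v ∈ e)).card : ℝ) := by
          exact_mod_cast hpos
        nlinarith [hf0 e]
      have hle2 : ∑ e ∈ A, ((U.filter (fun v => v ∈ e)).card : ℝ) * f e
          ≤ ∑ e ∈ G.edgeFinset, ((U.filter (fun v => v ∈ e)).card : ℝ) * f e := by
        refine Finset.sum_le_sum_of_subset_of_nonneg (Finset.filter_subset _ _)
          (fun e _ _ => ?_)
        exact mul_nonneg (Nat.cast_nonneg _) (hf0 e)
      have hle3 : ∑ e ∈ G.edgeFinset, ((U.filter (fun v => v ∈ e)).card : ℝ) * f e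
          ≤ (U.card : ℝ) := by
        rw [← swap_sum]
        calc ∑ v ∈ U, ∑ e ∈ G.edgeFinset.filter (fun e => v ∈ e), f e
            ≤ ∑ _v ∈ U, (1:ℝ) := Finset.sum_le_sum (fun v _ => hfm v)
          _ = (U.card : ℝ) := by simp
      linarith
    -- Step 2 : decompose B over parts
    set ins : Finset V → Finset (Sym2 V) :=
      fun S => G.edgeFinset.filter (fun e => ∀ w ∈ e, w ∈ S) with hins
    have hBeq : B = P.biUnion ins := by
      ext e
      rw [hB, Finset.mem_filter, Finset.mem_biUnion]
      constructor
      · rintro ⟨heG, hno⟩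
        push_neg at hno
        obtain ⟨S, hSP, hin⟩ := q4 e heG hno
        exact ⟨S, hSP, Finset.mem_filter.mpr ⟨heG, hin⟩⟩
      · rintro ⟨S, hSP, he⟩
        rw [hins, Finset.mem_filter] at he
        refine ⟨he.1, ?_⟩
        rintro ⟨w, hwe, hwU⟩
        exact q2 S hSP w (he.2 w hwe) hwU
    have hdisj : (↑P : Set (Finset V)).PairwiseDisjoint ins := by
      intro S hS T hT hST
      show Disjoint (ins S) (ins T)
      rw [Finset.disjoint_left]
      intro e heS heT
      rw [hins, Finset.mem_filter] at heS heT
      induction e using Sym2.inductionOn with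
      | _ a b =>
        have haS : a ∈ S := heS.2 a (by simp)
        have haT : a ∈ T := heT.2 a (by simp)
        exact (Finset.disjoint_left.mp (q1 S hS T hT hST) haS) haT
    have hBsum : ∑ e ∈ B, f e = ∑ S ∈ P, ∑ e ∈ ins S, f e := by
      rw [hBeq]
      exact Finset.sum_biUnion hdisj
    -- Step 3 : per part bound
    have hpart : ∀ S ∈ P, (1 - ε) * (∑ e ∈ ins S, f e)
        ≤ ((S.card : ℝ) - (if Odd S.card then 1 else 0)) / 2 := by
      intro S hSP
      have hσ0 : 0 ≤ ∑ e ∈ ins S, f e := Finset.sum_nonneg (fun e _ => hf0 e)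
      have hhalf : 2 * (∑ e ∈ ins S, f e) ≤ (S.card : ℝ) := by
        have h2card : ∀ e ∈ ins S, ((S.filter (fun v => v ∈ e)).card : ℝ) = 2 := by
          intro e he
          rw [hins, Finset.mem_filter] at he
          obtain ⟨heG, hin⟩ := he
          induction e using Sym2.inductionOn with
          | _ a b =>
            have hadj : G.Adj a b := G.mem_edgeSet.mp (SimpleGraph.mem_edgeFinset.mp heG)
            have hfeq : S.filter (fun v => v ∈ s(a,b)) = {a, b} := by
              ext w
              rw [Finset.mem_filter, Finset.mem_insert, Finset.mem_singleton]
              constructor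
              · rintro ⟨-, hw⟩
                exact Sym2.mem_iff.mp hw
              · rintro (rfl | rfl)
                · exact ⟨hin w (by simp), by simp⟩
                · exact ⟨hin w (by simp), by simp⟩
            rw [hfeq, Finset.card_insert_of_notMem (by simpa using hadj.ne),
              Finset.card_singleton]
            norm_num
        have hsum2 : ∑ e ∈ ins S, (2:ℝ) * f e
            = ∑ v ∈ S, ∑ e ∈ (ins S).filter (fun e => v ∈ e), f e := by
          rw [swap_sum]
          exact Finset.sum_congr rfl (fun e he => by rw [h2card e he])
        have hmono : ∀ v ∈ S, ∑ e ∈ (ins S).filter (fun e => v ∈ e), f e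
            ≤ ∑ e ∈ G.edgeFinset.filter (fun e => v ∈ e), f e := by
          intro v _
          refine Finset.sum_le_sum_of_subset_of_nonneg
            (Finset.filter_subset_filter _ ?_) (fun e _ _ => hf0 e)
          rw [hins]
          exact Finset.filter_subset _ _
        have : ∑ e ∈ ins S, (2:ℝ) * f e ≤ (S.card : ℝ) := by
          rw [hsum2]
          calc ∑ v ∈ S, ∑ e ∈ (ins S).filter (fun e => v ∈ e), f e
              ≤ ∑ v ∈ S, ∑ e ∈ G.edgeFinset.filter (fun e => v ∈ e), f e :=
                Finset.sum_le_sum hmono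
            _ ≤ ∑ _v ∈ S, (1:ℝ) := Finset.sum_le_sum (fun v _ => hfm v)
            _ = (S.card : ℝ) := by simp
        rw [← Finset.mul_sum] at this
        exact this
      by_cases hsmall : (S.card : ℝ) ≤ 1/ε
      · have hb := hblossom S hsmall
        have hb2 : ((S.card / 2 : ℕ) : ℝ)
            ≤ ((S.card : ℝ) - (if Odd S.card then 1 else 0)) / 2 := by
          rcases Nat.even_or_odd S.card with hpar | hpar
          · obtain ⟨m, hm⟩ := hpar
            rw [if_neg (by simp [Nat.odd_iff, Nat.even_iff.mp ⟨m, hm⟩] ), hm]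
            have : (m + m) / 2 = m := by omega
            rw [this]
            push_cast
            ring_nf
            linarith
          · obtain ⟨m, hm⟩ := hpar
            rw [if_pos (by exact hm ▸ ⟨m, rfl⟩), hm]
            have : (2*m + 1) / 2 = m := by omega
            rw [this]
            push_cast
            ring_nf
            linarith
        have h1 : (1 - ε) * (∑ e ∈ ins S, f e) ≤ ∑ e ∈ ins S, f e := by
          nlinarith
        have hb' : ∑ e ∈ ins S, f e ≤ ((S.card / 2 : ℕ) : ℝ) := by
          rw [hins]
          exact hb
        linarith
      · push_neg at hsmall
        have h1 : 1 ≤ ε * (S.card : ℝ) := by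
          rw [div_lt_iff₀ hε] at hsmall
          nlinarith
        have h2 : (1 - ε) * (∑ e ∈ ins S, f e) ≤ (1 - ε) * ((S.card : ℝ)/2) := by
          apply mul_le_mul_of_nonneg_left _ (by linarith)
          linarith
        have h3 : (1 - ε) * ((S.card : ℝ)/2) ≤ ((S.card : ℝ) - 1)/2 := by
          nlinarith
        split_ifs with hodd
        · linarith
        · have : ((S.card : ℝ) - 1)/2 ≤ (S.card : ℝ)/2 := by linarith
          simp only [sub_zero]
          linarith
    -- Step 4 : summing the targets
    have hcardsum : ∑ S ∈ P, (S.card : ℝ) = (Fintype.card V : ℝ) - (U.card : ℝ) := by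
      have hbu : P.biUnion id = Finset.univ \ U := by
        ext w
        rw [Finset.mem_biUnion, Finset.mem_sdiff]
        constructor
        · rintro ⟨S, hSP, hwS⟩
          exact ⟨Finset.mem_univ w, q2 S hSP w hwS⟩
        · rintro ⟨-, hwU⟩
          obtain ⟨S, hSP, hwS⟩ := q3 w hwU
          exact ⟨S, hSP, hwS⟩
      have hc : ∑ S ∈ P, S.card = (Finset.univ \ U).card := by
        rw [← hbu]
        exact (Finset.card_biUnion (fun S hS T hT hST => q1 S hS T hT hST)).symm
      have hc2 : (Finset.univ \ U).card = Fintype.card V - U.card := by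
        rw [Finset.card_sdiff_of_subset (Finset.subset_univ _), Finset.card_univ]
      have hc3 : U.card ≤ Fintype.card V := by
        rw [← Finset.card_univ]
        exact Finset.card_le_card (Finset.subset_univ _)
      calc ∑ S ∈ P, (S.card : ℝ) = ((∑ S ∈ P, S.card : ℕ) : ℝ) := by push_cast; ring
        _ = (((Fintype.card V - U.card : ℕ)) : ℝ) := by rw [hc, hc2]
        _ = (Fintype.card V : ℝ) - (U.card : ℝ) := by
            push_cast [hc3]
            ring
    have hoddsum : ∑ S ∈ P, (if Odd S.card then (1:ℝ) else 0)
        = ((P.filter (fun S => Odd S.card)).card : ℝ) := by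
      rw [Finset.sum_ite, Finset.sum_const, Finset.sum_const]
      simp
    -- Final assembly
    have hBle : (1 - ε) * (∑ e ∈ B, f e)
        ≤ ((Fintype.card V : ℝ) - (U.card : ℝ)
            - ((P.filter (fun S => Odd S.card)).card : ℝ)) / 2 := by
      rw [hBsum, Finset.mul_sum]
      calc ∑ S ∈ P, (1-ε) * (∑ e ∈ ins S, f e)
          ≤ ∑ S ∈ P, ((S.card : ℝ) - (if Odd S.card then 1 else 0)) / 2 :=
            Finset.sum_le_sum hpart
        _ = (∑ S ∈ P, (S.card : ℝ) - ∑ S ∈ P, (if Odd S.card then (1:ℝ) else 0)) / 2 := by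
            rw [← Finset.sum_sub_distrib, Finset.sum_div]
        _ = ((Fintype.card V : ℝ) - (U.card : ℝ)
            - ((P.filter (fun S => Odd S.card)).card : ℝ)) / 2 := by
            rw [hcardsum, hoddsum]
    have hA0 : (0:ℝ) ≤ ∑ e ∈ A, f e := Finset.sum_nonneg (fun e _ => hf0 e)
    have hAle : (1 - ε) * (∑ e ∈ A, f e) ≤ (U.card : ℝ) := by
      nlinarith
    have hq5 : (Fintype.card V : ℝ) + (U.card : ℝ)
        ≤ 2 * (nu G : ℝ) + ((P.filter (fun S => Odd S.card)).card : ℝ) := by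
      exact_mod_cast q5
    rw [hsplit, hMc]
    nlinarith
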